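/- Let η ≥ 1 be an integer, let A ⊆ B be finite subsets of ZMod η with 0 ∈ A (so both are nonempty), and let K ≥ 1 and 0 < ε < 1 be real numbers such that |B − A| ≤ K·|B|. Then A − A ⊆ Bohr(Spec_{1−ε}(B − A), √(8·ε·K)); that is, for every x, y ∈ A and every ξ ∈ ZMod η with |(B−A)^(ξ)| > 1−ε one has ‖(x−y)·ξ‖ ≤ √(8·ε·K). -/

import Mathlib

open Pointwise

/-- The "fractional part" norm on `ZMod η`: `min(x.val, η − x.val) / η`. -/
noncomputable def zmodNorm {η : ℕ} (x : ZMod η) : ℝ :=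
  (↑(min x.val (η - x.val)) : ℝ) / (η : ℝ)

/-- The normalized Fourier coefficient `Â(j)` of a finite subset of `ZMod η`. -/
noncomputable def zmodFourier {η : ℕ} (A : Finset (ZMod η)) (j : ZMod η) : ℂ :=
  (A.card : ℂ)⁻¹ *
    ∑ a ∈ A, Complex.exp (2 * (Real.pi : ℂ) * Complex.I * ((a * j).val : ℂ) / (η : ℂ))

noncomputable def chi (η : ℕ) (v : ZMod η) : ℂ :=
  Complex.exp (2 * (Real.pi : ℂ) * Complex.I * (v.val : ℂ) / (η : ℂ))

lemma abs_chi {η : ℕ} (v : ZMod η) : ‖chi η v‖ = 1 := by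
  have h : 2 * (Real.pi : ℂ) * Complex.I * (v.val : ℂ) / (η : ℂ)
      = ((2 * Real.pi * v.val / η : ℝ) : ℂ) * Complex.I := by push_cast; ring
  rw [chi, h, Complex.norm_exp_ofReal_mul_I]

lemma chi_int {η : ℕ} [NeZero η] (v : ZMod η) (n : ℤ) (hn : (n : ZMod η) = v) :
    chi η v = Complex.exp (2 * (Real.pi : ℂ) * Complex.I * (n : ℂ) / (η : ℂ)) := by
  have hη : (η : ℂ) ≠ 0 := Nat.cast_ne_zero.2 (NeZero.ne η)
  have hdvd : (η : ℤ) ∣ (n - (v.val : ℤ)) := by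
    rw [← ZMod.intCast_zmod_eq_zero_iff_dvd]
    push_cast
    simp [hn, ZMod.natCast_val, ZMod.cast_id]
  obtain ⟨k, hk⟩ := hdvd
  have hnk : (n : ℂ) = (v.val : ℂ) + (η : ℂ) * (k : ℂ) := by
    have : (n : ℤ) = (v.val : ℤ) + (η : ℤ) * k := by linarith [hk]
    exact_mod_cast congrArg (fun m : ℤ => (m : ℂ)) this
  rw [chi, hnk]
  have harg : 2 * (Real.pi : ℂ) * Complex.I * ((v.val : ℂ) + (η : ℂ) * (k : ℂ)) / (η : ℂ)
      = 2 * (Real.pi : ℂ) * Complex.I * (v.val : ℂ) / (η : ℂ) + (k : ℂ) * (2 * Real.pi * Complex.I) := by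
    field_simp
  rw [harg, Complex.exp_add, Complex.exp_int_mul_two_pi_mul_I, mul_one]

lemma chi_add {η : ℕ} [NeZero η] (u v : ZMod η) : chi η (u + v) = chi η u * chi η v := by
  rw [chi_int (u + v) ((u.val : ℤ) + (v.val : ℤ)) (by push_cast; simp [ZMod.natCast_val, ZMod.cast_id]),
    chi, chi, ← Complex.exp_add]
  congr 1
  push_cast
  ring

lemma chi_sub_chi {η : ℕ} [NeZero η] (a b : ZMod η) :
    ‖chi η a - chi η b‖ = ‖chi η (a - b) - 1‖ := by
  have h : chi η a = chi η (a - b) * chi η b := by rw [← chi_add]; ring_nf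
  rw [h]
  calc ‖chi η (a - b) * chi η b - chi η b‖
      = ‖(chi η (a - b) - 1) * chi η b‖ := by ring_nf
    _ = ‖chi η (a - b) - 1‖ * ‖chi η b‖ := norm_mul _ _
    _ = ‖chi η (a - b) - 1‖ := by rw [abs_chi, mul_one]

lemma four_mul_zmodNorm_le {η : ℕ} [NeZero η] (w : ZMod η) :
    4 * zmodNorm w ≤ ‖chi η w - 1‖ := by
  have hη : 0 < (η : ℝ) := by exact_mod_cast Nat.pos_of_ne_zero (NeZero.ne η)
  have hπ : 0 < Real.pi := Real.pi_pos
  have htη : w.val < η := ZMod.val_lt w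
  have hu2 : 2 * min w.val (η - w.val) ≤ η := by omega
  have hchi : chi η w = Complex.exp (((2 * Real.pi * w.val / η : ℝ) : ℂ) * Complex.I) := by
    rw [chi]; congr 1; push_cast; ring
  have habs2 : ‖chi η w - 1‖ ^ 2
      = 2 - 2 * Real.cos (2 * Real.pi * w.val / η) := by
    rw [hchi, Complex.exp_mul_I, Complex.sq_norm, ← Complex.ofReal_cos, ← Complex.ofReal_sin]
    have h : (Real.cos (2 * Real.pi * w.val / η) : ℂ)
        + (Real.sin (2 * Real.pi * w.val / η) : ℂ) * Complex.I - 1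
        = Complex.mk (Real.cos (2 * Real.pi * w.val / η) - 1)
            (Real.sin (2 * Real.pi * w.val / η)) := by
      apply Complex.ext <;> simp [-Complex.ofReal_cos, -Complex.ofReal_sin]
    rw [h, Complex.normSq_mk]
    nlinarith [Real.sin_sq_add_cos_sq (2 * Real.pi * w.val / η)]
  have hcos : Real.cos (2 * Real.pi * w.val / η)
      = Real.cos (2 * Real.pi * (min w.val (η - w.val)) / η) := by
    rcases min_cases w.val (η - w.val) with ⟨h1, _⟩ | ⟨h1, _⟩
    · rw [h1]
    · rw [h1]
      have hc : ((η - w.val : ℕ) : ℝ) = (η : ℝ) - w.val := by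
        push_cast [Nat.cast_sub htη.le]; ring
      have harg : 2 * Real.pi * ((η - w.val : ℕ) : ℝ) / η
          = 2 * Real.pi - 2 * Real.pi * w.val / η := by
        rw [hc]; field_simp
      rw [harg, Real.cos_two_pi_sub]
  have hφ0 : (0:ℝ) ≤ 2 * Real.pi * (min w.val (η - w.val)) / η := by positivity
  have hφπ : |2 * Real.pi * ((min w.val (η - w.val) : ℕ) : ℝ) / η| ≤ Real.pi := by
    rw [abs_of_nonneg hφ0, div_le_iff₀ hη]
    have h2u : 2 * ((min w.val (η - w.val) : ℕ) : ℝ) ≤ (η : ℝ) := by exact_mod_cast hu2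
    nlinarith
  have hc := Real.cos_le_one_sub_mul_cos_sq hφπ
  have hsq : 2 / Real.pi ^ 2 * (2 * Real.pi * ((min w.val (η - w.val) : ℕ) : ℝ) / η) ^ 2
      = 8 * (((min w.val (η - w.val) : ℕ) : ℝ) / η) ^ 2 := by
    field_simp; ring
  have hnorm : zmodNorm w = ((min w.val (η - w.val) : ℕ) : ℝ) / η := rfl
  have h1 : (4 * zmodNorm w) ^ 2 ≤ ‖chi η w - 1‖ ^ 2 := by
    rw [habs2, hcos, hnorm]
    nlinarith [hc, hsq]
  have h2 := Real.sqrt_le_sqrt h1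
  rwa [Real.sqrt_sq (by rw [hnorm]; positivity), Real.sqrt_sq (norm_nonneg _)] at h2

/-- If `A ⊆ B`, `0 ∈ A`, `K ≥ 1`, `0 < ε < 1`, and
`|B − A| ≤ K·|B|`, then `A − A ⊆ Bohr(Spec_{1−ε}(B − A), √(8εK))`. -/
theorem stmt_3 (η : ℕ) (hη : 1 ≤ η) (A B : Finset (ZMod η))
    (hAB : A ⊆ B) (h0 : (0 : ZMod η) ∈ A)
    (K ε : ℝ) (hK : 1 ≤ K) (hε0 : 0 < ε) (hε1 : ε < 1)
    (hcard : ((B - A).card : ℝ) ≤ K * B.card) :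
    ∀ x ∈ A, ∀ y ∈ A, ∀ ξ : ZMod η,
      ‖zmodFourier (B - A) ξ‖ > 1 - ε →
      zmodNorm ((x - y) * ξ) ≤ Real.sqrt (8 * ε * K) := by
  intro x hx y hy ξ hξ
  haveI : NeZero η := ⟨by omega⟩
  set C := B - A with hCdef
  have hBne : B.Nonempty := ⟨0, hAB h0⟩
  have hBsubC : B ⊆ C := fun b hb => by simpa using Finset.sub_mem_sub hb h0
  have hCne : C.Nonempty := hBne.mono hBsubC
  have hm0 : (0:ℝ) < C.card := by exact_mod_cast Finset.card_pos.2 hCne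
  have hB0 : (0:ℝ) < B.card := by exact_mod_cast Finset.card_pos.2 hBne
  set f : ZMod η → ℂ := fun c => chi η (c * ξ) with hf
  set S : ℂ := ∑ c ∈ C, f c with hSdef
  have hfour : zmodFourier C ξ = (C.card : ℂ)⁻¹ * S := rfl
  have hSabs : (1 - ε) * C.card < ‖S‖ := by
    have h := hξ
    rw [hfour, norm_mul, norm_inv, Complex.norm_natCast, gt_iff_lt, inv_mul_eq_div,
      lt_div_iff₀ hm0] at h
    linarith
  have hS0 : (0:ℝ) < ‖S‖ := lt_of_le_of_lt (by nlinarith) hSabs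
  set θ : ℂ := S / (‖S‖ : ℂ) with hθdef
  have hθabs : ‖θ‖ = 1 := by
    rw [hθdef, norm_div, Complex.norm_real, Real.norm_eq_abs, abs_of_pos hS0, div_self hS0.ne']
  have hre : ∑ c ∈ C, (θ * (starRingEnd ℂ) (f c)).re = ‖S‖ := by
    have h1 : ∑ c ∈ C, θ * (starRingEnd ℂ) (f c) = θ * (starRingEnd ℂ) S := by
      rw [← Finset.mul_sum, hSdef, map_sum]
    have h2 : θ * (starRingEnd ℂ) S = (‖S‖ : ℂ) := by
      rw [hθdef, div_mul_eq_mul_div, Complex.mul_conj, Complex.normSq_eq_norm_sq]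
      rw [sq, Complex.ofReal_mul]
      rw [mul_div_assoc, div_self (by exact_mod_cast hS0.ne'), mul_one]
    rw [← Complex.re_sum, h1, h2, Complex.ofReal_re]
  have hkey : ∑ c ∈ C, Complex.normSq (θ - f c) ≤ 2 * ε * C.card := by
    have hterm : ∀ c ∈ C, Complex.normSq (θ - f c) = 2 - 2 * (θ * (starRingEnd ℂ) (f c)).re := by
      intro c _
      rw [Complex.normSq_sub]
      have hθn : Complex.normSq θ = 1 := by
        rw [← Complex.sq_norm, hθabs, one_pow]
      have hfn : Complex.normSq (f c) = 1 := by
        rw [← Complex.sq_norm, hf]; simp [abs_chi]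
      rw [hθn, hfn]; ring
    rw [Finset.sum_congr rfl hterm, Finset.sum_sub_distrib, Finset.sum_const, nsmul_eq_mul,
      ← Finset.mul_sum, hre]
    linarith
  have hAsum : ∀ x' ∈ A, ∑ b ∈ B, Complex.normSq (θ - f (b - x')) ≤ 2 * ε * C.card := by
    intro x' hx'
    have himg : B.image (· - x') ⊆ C := by
      intro c hc
      obtain ⟨b, hb, rfl⟩ := Finset.mem_image.mp hc
      exact Finset.sub_mem_sub hb hx'
    calc ∑ b ∈ B, Complex.normSq (θ - f (b - x'))
        = ∑ c ∈ B.image (· - x'), Complex.normSq (θ - f c) :=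
          (Finset.sum_image (f := fun c => Complex.normSq (θ - f c)) (g := fun b => b - x')
            (fun a _ b _ h => by simpa using h)).symm
      _ ≤ ∑ c ∈ C, Complex.normSq (θ - f c) :=
          Finset.sum_le_sum_of_subset_of_nonneg himg (fun _ _ _ => Complex.normSq_nonneg _)
      _ ≤ 2 * ε * C.card := hkey
  have hεK : (0:ℝ) ≤ 2 * ε * K := by positivity
  have hCS : ∀ x' ∈ A, ∑ b ∈ B, ‖θ - f (b - x')‖
      ≤ B.card * Real.sqrt (2 * ε * K) := by
    intro x' hx'
    have h1 : (∑ b ∈ B, ‖θ - f (b - x')‖) ^ 2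
        ≤ B.card * ∑ b ∈ B, ‖θ - f (b - x')‖ ^ 2 :=
      sq_sum_le_card_mul_sum_sq
    have h2 : ∑ b ∈ B, ‖θ - f (b - x')‖ ^ 2
        = ∑ b ∈ B, Complex.normSq (θ - f (b - x')) := by
      refine Finset.sum_congr rfl fun b _ => Complex.sq_norm _
    have h3 : (∑ b ∈ B, ‖θ - f (b - x')‖) ^ 2
        ≤ (B.card : ℝ) ^ 2 * (2 * ε * K) := by
      rw [h2] at h1
      calc (∑ b ∈ B, ‖θ - f (b - x')‖) ^ 2
          ≤ (B.card : ℝ) * (2 * ε * C.card) :=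
            h1.trans (by exact mul_le_mul_of_nonneg_left (hAsum x' hx') hB0.le)
        _ ≤ (B.card : ℝ) * (2 * ε * (K * B.card)) := by
            have := mul_le_mul_of_nonneg_left hcard (by positivity : (0:ℝ) ≤ 2 * ε)
            nlinarith
        _ = (B.card : ℝ) ^ 2 * (2 * ε * K) := by ring
    have h4 := Real.sqrt_le_sqrt h3
    rwa [Real.sqrt_sq (Finset.sum_nonneg fun b _ => norm_nonneg _),
      Real.sqrt_mul (by positivity), Real.sqrt_sq hB0.le] at h4
  set D : ℝ := ‖chi η ((x - y) * ξ) - 1‖ with hDdef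
  have hterm : ∀ b ∈ B, D ≤ ‖θ - f (b - x)‖ + ‖θ - f (b - y)‖ := by
    intro b hb
    have he : D = ‖f (b - y) - f (b - x)‖ := by
      rw [hDdef, hf]
      simp only
      rw [chi_sub_chi]
      congr 2
      ring
    rw [he]
    calc ‖f (b - y) - f (b - x)‖
        ≤ ‖f (b - y) - θ‖ + ‖θ - f (b - x)‖ :=
          norm_sub_le_norm_sub_add_norm_sub _ _ _
      _ = ‖θ - f (b - x)‖ + ‖θ - f (b - y)‖ := by
          rw [norm_sub_rev (f (b - y)) θ]; ring
  have hmain : (B.card : ℝ) * D ≤ 2 * (B.card * Real.sqrt (2 * ε * K)) := by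
    calc (B.card : ℝ) * D = ∑ _b ∈ B, D := by rw [Finset.sum_const, nsmul_eq_mul]
      _ ≤ ∑ b ∈ B, (‖θ - f (b - x)‖ + ‖θ - f (b - y)‖) :=
          Finset.sum_le_sum hterm
      _ = (∑ b ∈ B, ‖θ - f (b - x)‖) + ∑ b ∈ B, ‖θ - f (b - y)‖ :=
          Finset.sum_add_distrib
      _ ≤ B.card * Real.sqrt (2 * ε * K) + B.card * Real.sqrt (2 * ε * K) :=
          add_le_add (hCS x hx) (hCS y hy)
      _ = 2 * (B.card * Real.sqrt (2 * ε * K)) := by ring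
  have hD : D ≤ 2 * Real.sqrt (2 * ε * K) := by
    have := (mul_le_mul_iff_right₀ hB0).mp (by linarith : (B.card : ℝ) * D ≤ B.card * (2 * Real.sqrt (2 * ε * K)))
    exact this
  have hlow := four_mul_zmodNorm_le ((x - y) * ξ)
  have hsqrt : Real.sqrt (2 * ε * K) ≤ Real.sqrt (8 * ε * K) :=
    Real.sqrt_le_sqrt (by nlinarith)
  have hnn : 0 ≤ Real.sqrt (8 * ε * K) := Real.sqrt_nonneg _
  linarith
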